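/- Let {(x^k, y^k)} be a sequence generated by the inexact penalty decomposition method, i.e., for every k one has ‖∇_x q_{τ_k}(x^{k+1}, y^{k+1})‖ ≤ δ_k and y^{k+1} ∈ Π_D(x^{k+1}), where δ_k → 0, δ_k ≥ 0, and τ_k → ∞ with τ_k > 0. If (x̄, ȳ) is an accumulation point of the sequence that is feasible for the decomposed problem (G(x̄) ∈ C, x̄ = ȳ ∈ D) and is AM-regular for the decomposed problem, then x̄ is an M-stationary point of problem (P): there exists λ ∈ Y with 0 ∈ ∇f(x̄) + G'(x̄)*λ + N_D^lim(x̄) and λ ∈ N_C(G(x̄)). -/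

import Mathlib

open Filter Topology RealInnerProductSpace

noncomputable section

/-- The (set-valued) Euclidean projection of `x` onto `D`:
`Π_D(x) = argmin_{z ∈ D} ‖z - x‖`. -/
def projSet {E : Type*} [NormedAddCommGroup E] (D : Set E) (x : E) : Set E :=
  {z | z ∈ D ∧ ∀ w ∈ D, ‖z - x‖ ≤ ‖w - x‖}

/-- The limiting (Mordukhovich) normal cone to `D` at `x`:
`N_D^lim(x) = limsup_{v → x} cone(v - Π_D(v))`, empty outside `D`. -/
def limNormalCone {E : Type*} [NormedAddCommGroup E] [NormedSpace ℝ E]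
    (D : Set E) (x : E) : Set E :=
  {w | x ∈ D ∧ ∃ v ws : ℕ → E,
    Tendsto v atTop (𝓝 x) ∧ Tendsto ws atTop (𝓝 w) ∧
    ∀ j, ∃ t : ℝ, ∃ p, 0 ≤ t ∧ p ∈ projSet D (v j) ∧ ws j = t • (v j - p)}

/-- The normal cone (of convex analysis) to the convex set `C` at `y`, empty outside `C`. -/
def convNormalCone {E : Type*} [NormedAddCommGroup E] [InnerProductSpace ℝ E]
    (C : Set E) (y : E) : Set E :=
  {l | y ∈ C ∧ ∀ c ∈ C, ⟪l, c - y⟫ ≤ 0}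

variable {X Y : Type*} [NormedAddCommGroup X] [InnerProductSpace ℝ X] [FiniteDimensional ℝ X]
  [NormedAddCommGroup Y] [InnerProductSpace ℝ Y] [FiniteDimensional ℝ Y]

/-- `xb` is an M-stationary (Mordukhovich-stationary) point of problem (P):
minimize `f x` s.t. `G x ∈ C`, `x ∈ D`. -/
def MStationary (f : X → ℝ) (G : X → Y) (C : Set Y) (D : Set X) (xb : X) : Prop :=
  G xb ∈ C ∧ xb ∈ D ∧
    ∃ l : Y, l ∈ convNormalCone C (G xb) ∧
      ∃ w ∈ limNormalCone D xb,
        gradient f xb + ContinuousLinearMap.adjoint (fderiv ℝ G xb) l + w = 0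

/-- The partial penalty function
`q_τ(x,y) = f(x) + (τ/2) (‖x-y‖² + dist_C(G(x))²)`, where `dist_C(w) = ‖w - P_C(w)‖`
and `PC` denotes the Euclidean projection onto `C`. -/
def qpen (f : X → ℝ) (G : X → Y) (PC : Y → Y) (τ : ℝ) (x y : X) : ℝ :=
  f x + τ / 2 * (‖x - y‖ ^ 2 + ‖G x - PC (G x)‖ ^ 2)

/-- The gradient `∇_x q_τ(x, y)` of the penalty function w.r.t. the first block. -/
def gradqx (f : X → ℝ) (G : X → Y) (PC : Y → Y) (τ : ℝ) (x y : X) : X :=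
  gradient (fun u => qpen f G PC τ u y) x

/-- The set `M̃(w,z) = G̃'(w)* N_C̃(G̃(w) - z) + N_D̃^lim(w)` of the decomposed problem,
written componentwise: for `w = (x,y)` and `z = (z₁,z₂)`, its elements are the pairs
`(G'(x)*λ + μ, -μ + w')` with `λ ∈ N_C(G(x) - z₁)`, `μ ∈ X` arbitrary (the normal cone to
`{0}` at `x - y - z₂ = 0`), and `w' ∈ N_D^lim(y)`. -/
def MsetDec (G : X → Y) (C : Set Y) (D : Set X) (x y : X) (z1 : Y) (z2 : X) : Set (X × X) :=
  {v | x - y - z2 = 0 ∧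
    ∃ l ∈ convNormalCone C (G x - z1), ∃ μ : X, ∃ w ∈ limNormalCone D y,
      v = (ContinuousLinearMap.adjoint (fderiv ℝ G x) l + μ, -μ + w)}

/-- `(xb, yb)` is AM-regular for the decomposed problem:
`limsup_{w → (xb,yb), z → 0} M̃(w,z) ⊆ M̃((xb,yb), 0)`. -/
def AMRegularDec (G : X → Y) (C : Set Y) (D : Set X) (xb yb : X) : Prop :=
  ∀ v : X × X,
    (∃ (xs ys : ℕ → X) (z1 : ℕ → Y) (z2 : ℕ → X) (vs : ℕ → X × X),
      (∀ k, ys k ∈ D) ∧ Tendsto xs atTop (𝓝 xb) ∧ Tendsto ys atTop (𝓝 yb) ∧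
      Tendsto z1 atTop (𝓝 0) ∧ Tendsto z2 atTop (𝓝 0) ∧ Tendsto vs atTop (𝓝 v) ∧
      ∀ k, vs k ∈ MsetDec G C D (xs k) (ys k) (z1 k) (z2 k)) →
    v ∈ MsetDec G C D xb yb 0 0


section AuxLemmas

variable {E : Type*} [NormedAddCommGroup E] [InnerProductSpace ℝ E]

/-- Variational inequality for a projection map onto a convex set. -/
lemma proj_vi {C : Set E} (hCconv : Convex ℝ C) (P : E → E)
    (hP : ∀ w, P w ∈ C ∧ ∀ c ∈ C, ‖P w - w‖ ≤ ‖c - w‖) (w : E) :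
    ∀ c ∈ C, ⟪w - P w, c - P w⟫ ≤ 0 := by
  have hmem := (hP w).1
  refine (norm_eq_iInf_iff_real_inner_le_zero hCconv hmem).1 ?_
  haveI : Nonempty C := ⟨⟨P w, hmem⟩⟩
  refine le_antisymm (le_ciInf fun z => ?_) ?_
  · rw [norm_sub_rev, norm_sub_rev w]
    exact (hP w).2 z z.2
  · refine ciInf_le ?_ (⟨P w, hmem⟩ : C)
    exact ⟨0, by rintro a ⟨z, rfl⟩; exact norm_nonneg _⟩

/-- Projections onto convex sets are nonexpansive. -/
lemma proj_nonexpansive {C : Set E} (hCconv : Convex ℝ C) (P : E → E)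
    (hP : ∀ w, P w ∈ C ∧ ∀ c ∈ C, ‖P w - w‖ ≤ ‖c - w‖) (v w : E) :
    ‖P v - P w‖ ≤ ‖v - w‖ := by
  have e1 := proj_vi hCconv P hP v (P w) (hP w).1
  have e2 := proj_vi hCconv P hP w (P v) (hP v).1
  have key : ‖P v - P w‖ ^ 2 ≤ ⟪v - w, P v - P w⟫ := by
    have h0 : (0:ℝ) ≤ ⟪(v - w) - (P v - P w), P v - P w⟫ := by
      have hrw : (v - w) - (P v - P w) = (v - P v) - (w - P w) := by abel
      rw [hrw, inner_sub_left]
      have e1' : (0:ℝ) ≤ ⟪v - P v, P v - P w⟫ := by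
        rw [show P w - P v = -(P v - P w) by abel, inner_neg_right] at e1
        linarith
      linarith
    rw [inner_sub_left, real_inner_self_eq_norm_sq] at h0
    linarith
  have h2 := real_inner_le_norm (v - w) (P v - P w)
  nlinarith [norm_nonneg (P v - P w), norm_nonneg (v - w)]

/-- The squared distance to a convex set (written via a projection map) has gradient
`2 (w - P w)`. -/
lemma hasGradientAt_distSq [CompleteSpace E] {C : Set E} (hCconv : Convex ℝ C) (P : E → E)
    (hP : ∀ w, P w ∈ C ∧ ∀ c ∈ C, ‖P w - w‖ ≤ ‖c - w‖) (w : E) :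
    HasGradientAt (fun u => ‖u - P u‖ ^ 2) ((2:ℝ) • (w - P w)) w := by
  rw [hasGradientAt_iff_isLittleO]
  have key : ∀ u : E, |‖u - P u‖ ^ 2 - ‖w - P w‖ ^ 2 - ⟪(2:ℝ) • (w - P w), u - w⟫|
      ≤ 5 * ‖u - w‖ ^ 2 := by
    intro u
    set d := u - w with hd
    have hupper : ‖u - P u‖ ^ 2 ≤ ‖w - P w‖ ^ 2 + 2 * ⟪w - P w, d⟫ + ‖d‖ ^ 2 := by
      have h1 : ‖u - P u‖ ≤ ‖u - P w‖ := by
        rw [norm_sub_rev, norm_sub_rev u (P w)]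
        exact (hP u).2 (P w) (hP w).1
      have h2 : ‖u - P w‖ ^ 2 = ‖w - P w‖ ^ 2 + 2 * ⟪w - P w, d⟫ + ‖d‖ ^ 2 := by
        rw [show u - P w = (w - P w) + d by rw [hd]; abel, norm_add_sq_real]
      nlinarith [norm_nonneg (u - P u), norm_nonneg (u - P w)]
    have hlower : ‖w - P w‖ ^ 2 ≤ ‖u - P u‖ ^ 2 - 2 * ⟪u - P u, d⟫ + ‖d‖ ^ 2 := by
      have h1 : ‖w - P w‖ ≤ ‖w - P u‖ := by
        rw [norm_sub_rev, norm_sub_rev w (P u)]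
        exact (hP w).2 (P u) (hP u).1
      have h2 : ‖w - P u‖ ^ 2 = ‖u - P u‖ ^ 2 - 2 * ⟪u - P u, d⟫ + ‖d‖ ^ 2 := by
        rw [show w - P u = (u - P u) - d by rw [hd]; abel, norm_sub_sq_real]
      nlinarith [norm_nonneg (w - P w), norm_nonneg (w - P u)]
    have hlip : ‖(u - P u) - (w - P w)‖ ≤ 2 * ‖d‖ := by
      have h3 : ‖(u - P u) - (w - P w)‖ ≤ ‖u - w‖ + ‖P u - P w‖ := by
        have : (u - P u) - (w - P w) = (u - w) - (P u - P w) := by abel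
        rw [this]
        exact norm_sub_le _ _
      have h4 := proj_nonexpansive hCconv P hP u w
      rw [← hd] at h3 h4
      linarith
    have hinner : |⟪(u - P u) - (w - P w), d⟫| ≤ 2 * ‖d‖ ^ 2 := by
      calc |⟪(u - P u) - (w - P w), d⟫| ≤ ‖(u - P u) - (w - P w)‖ * ‖d‖ :=
            abs_real_inner_le_norm _ _
        _ ≤ 2 * ‖d‖ * ‖d‖ := mul_le_mul_of_nonneg_right hlip (norm_nonneg _)
        _ = 2 * ‖d‖ ^ 2 := by ring
    rw [real_inner_smul_left]
    rw [abs_le]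
    have hsplit : ⟪(u - P u) - (w - P w), d⟫ = ⟪u - P u, d⟫ - ⟪w - P w, d⟫ :=
      inner_sub_left _ _ _
    rw [abs_le] at hinner
    constructor <;> nlinarith [norm_nonneg d]
  have h1 : (fun u : E => ‖u - P u‖ ^ 2 - ‖w - P w‖ ^ 2 - ⟪(2:ℝ) • (w - P w), u - w⟫)
      =O[𝓝 w] fun u => ‖u - w‖ ^ 2 := by
    refine Asymptotics.IsBigO.of_bound 5 (Eventually.of_forall fun u => ?_)
    rw [Real.norm_eq_abs, Real.norm_eq_abs, abs_of_nonneg (sq_nonneg ‖u - w‖)]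
    exact key u
  have h2 : (fun u : E => ‖u - w‖ ^ 2) =o[𝓝 w] fun u => u - w := by
    rw [Asymptotics.isLittleO_iff]
    intro c hc
    filter_upwards [Metric.ball_mem_nhds w hc] with u hu
    rw [mem_ball_iff_norm] at hu
    rw [Real.norm_eq_abs, abs_of_nonneg (sq_nonneg ‖u - w‖)]
    nlinarith [norm_nonneg (u - w)]
  exact h1.trans_isLittleO h2

end AuxLemmas

/-- If `y` is a projection of `x` onto `D`, then any nonnegative multiple of `x - y`
belongs to the limiting normal cone of `D` at `y`. -/
lemma smul_sub_mem_limNormalCone {E : Type*} [NormedAddCommGroup E] [NormedSpace ℝ E]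
    {D : Set E} {x y : E} (hy : y ∈ projSet D x) {t : ℝ} (ht : 0 ≤ t) :
    t • (x - y) ∈ limNormalCone D y := by
  refine ⟨hy.1, fun m => y + (((m:ℝ)+1))⁻¹ • (x - y), fun _ => t • (x - y), ?_,
    tendsto_const_nhds, ?_⟩
  · have h : Tendsto (fun m : ℕ => (((m:ℝ)+1))⁻¹) atTop (𝓝 0) := by
      simpa [one_div] using tendsto_one_div_add_atTop_nhds_zero_nat (𝕜 := ℝ)
    have := (h.smul_const (x - y)).const_add y
    simpa using this
  · intro j
    set s : ℝ := (((j:ℝ)+1))⁻¹ with hs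
    have hspos : 0 < s := by positivity
    have hs1 : s ≤ 1 := by
      rw [hs]
      rw [inv_le_one_iff₀]
      right; linarith [Nat.cast_nonneg (α := ℝ) j]
    refine ⟨((j:ℝ)+1) * t, y, by positivity, ⟨hy.1, ?_⟩, ?_⟩
    · intro z hz
      set v : E := y + s • (x - y) with hv
      have hyv : ‖y - v‖ = s * ‖x - y‖ := by
        rw [show y - v = -(s • (x - y)) by rw [hv]; abel]
        rw [norm_neg, norm_smul, Real.norm_eq_abs, abs_of_pos hspos]
      have hxv : ‖x - v‖ = (1 - s) * ‖x - y‖ := by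
        rw [show x - v = (1 - s) • (x - y) by rw [hv, sub_smul, one_smul]; abel]
        rw [norm_smul, Real.norm_eq_abs, abs_of_nonneg (by linarith)]
      have tri : ‖z - x‖ ≤ ‖z - v‖ + ‖x - v‖ := by
        have h := norm_sub_le (z - v) (x - v)
        rwa [sub_sub_sub_cancel_right] at h
      have hzx := hy.2 z hz
      have hyx : ‖y - x‖ = ‖x - y‖ := norm_sub_rev _ _
      linarith
    · show t • (x - y) = _
      rw [add_sub_cancel_left, smul_smul]
      have hne : ((j:ℝ)+1) ≠ 0 := by positivity
      field_simp

/-- The gradient of the penalty function `q_τ(·, y)` at `x`. -/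
lemma gradqx_eq {X Y : Type*}
    [NormedAddCommGroup X] [InnerProductSpace ℝ X] [FiniteDimensional ℝ X]
    [NormedAddCommGroup Y] [InnerProductSpace ℝ Y] [FiniteDimensional ℝ Y]
    (f : X → ℝ) (G : X → Y) {C : Set Y}
    (hf : ContDiff ℝ 1 f) (hG : ContDiff ℝ 1 G) (hCconv : Convex ℝ C)
    (PC : Y → Y) (hPC : ∀ w, PC w ∈ C ∧ ∀ c ∈ C, ‖PC w - w‖ ≤ ‖c - w‖)
    (τ : ℝ) (x y : X) :
    gradqx f G PC τ x y = gradient f x + τ • (x - y) +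
      τ • (ContinuousLinearMap.adjoint (fderiv ℝ G x)) (G x - PC (G x)) := by
  set A := fderiv ℝ G x with hA
  set p := PC (G x) with hp
  have hPy : ∀ w : X, (fun _ : X => y) w ∈ ({y} : Set X) ∧
      ∀ c ∈ ({y} : Set X), ‖(fun _ : X => y) w - w‖ ≤ ‖c - w‖ := by
    intro w
    exact ⟨rfl, by rintro c rfl; exact le_refl _⟩
  have h1 : HasGradientAt (fun u : X => ‖u - y‖ ^ 2) ((2:ℝ) • (x - y)) x := by
    have := hasGradientAt_distSq (convex_singleton y) (fun _ : X => y) hPy x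
    simpa using this
  have h2 : HasGradientAt (fun w : Y => ‖w - PC w‖ ^ 2) ((2:ℝ) • (G x - p)) (G x) :=
    hasGradientAt_distSq hCconv PC hPC (G x)
  have hGd : HasFDerivAt G A x := (hG.differentiable one_ne_zero x).hasFDerivAt
  have h3 : HasFDerivAt (fun u : X => ‖G u - PC (G u)‖ ^ 2)
      ((InnerProductSpace.toDual ℝ Y ((2:ℝ) • (G x - p))).comp A) x :=
    (h2.hasFDerivAt).comp x hGd
  have hf' : HasFDerivAt f (InnerProductSpace.toDual ℝ X (gradient f x)) x :=
    ((hf.differentiable one_ne_zero) x).hasGradientAt.hasFDerivAt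
  have hsum : HasFDerivAt (fun u : X => qpen f G PC τ u y)
      (InnerProductSpace.toDual ℝ X (gradient f x) +
        (τ/2) • ((InnerProductSpace.toDual ℝ X ((2:ℝ) • (x - y))) +
          (InnerProductSpace.toDual ℝ Y ((2:ℝ) • (G x - p))).comp A)) x := by
    have := hf'.add (((h1.hasFDerivAt).add h3).const_mul (τ/2))
    exact this
  have hkey : (InnerProductSpace.toDual ℝ X
      (gradient f x + τ • (x - y) + τ • (ContinuousLinearMap.adjoint A) (G x - p))) =
      (InnerProductSpace.toDual ℝ X (gradient f x) +
        (τ/2) • ((InnerProductSpace.toDual ℝ X ((2:ℝ) • (x - y))) +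
          (InnerProductSpace.toDual ℝ Y ((2:ℝ) • (G x - p))).comp A)) := by
    ext v
    simp only [InnerProductSpace.toDual_apply_apply, ContinuousLinearMap.add_apply,
      ContinuousLinearMap.smul_apply, ContinuousLinearMap.comp_apply,
      inner_add_left, real_inner_smul_left, smul_eq_mul]
    rw [ContinuousLinearMap.adjoint_inner_left]
    ring
  have hg : HasGradientAt (fun u : X => qpen f G PC τ u y)
      (gradient f x + τ • (x - y) + τ • (ContinuousLinearMap.adjoint A) (G x - p)) x := by
    rw [hasGradientAt_iff_hasFDerivAt, hkey]
    exact hsum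
  exact hg.gradient

/-- a feasible, AM-regular accumulation point of the inexact penalty
decomposition method yields an M-stationary point of problem (P). -/
theorem pd_feasible_regular_accumulation_point_is_M_stationary
    (f : X → ℝ) (G : X → Y) (C : Set Y) (D : Set X)
    (hf : ContDiff ℝ 1 f) (hG : ContDiff ℝ 1 G)
    (hCne : C.Nonempty) (hCcl : IsClosed C) (hCconv : Convex ℝ C)
    (hDne : D.Nonempty) (hDcl : IsClosed D)
    (PC : Y → Y) (hPC : ∀ w, PC w ∈ C ∧ ∀ c ∈ C, ‖PC w - w‖ ≤ ‖c - w‖)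
    (δ τs : ℕ → ℝ) (hδnn : ∀ k, 0 ≤ δ k) (hδ0 : Tendsto δ atTop (𝓝 0))
    (hτpos : ∀ k, 0 < τs k) (hτ : Tendsto τs atTop atTop)
    (x y : ℕ → X)
    (halg : ∀ k, ‖gradqx f G PC (τs k) (x (k + 1)) (y (k + 1))‖ ≤ δ k ∧
      y (k + 1) ∈ projSet D (x (k + 1)))
    (xb yb : X) (φ : ℕ → ℕ) (hφ : StrictMono φ)
    (hxb : Tendsto (fun j => x (φ j)) atTop (𝓝 xb))
    (hyb : Tendsto (fun j => y (φ j)) atTop (𝓝 yb))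
    (hfeas : G xb ∈ C ∧ xb = yb ∧ yb ∈ D)
    (hreg : AMRegularDec G C D xb yb) :
    MStationary f G C D xb := by
  obtain ⟨hGxbC, hxyb, hybD⟩ := hfeas
  have hφge : ∀ j : ℕ, j + 1 ≤ φ (j + 1) := fun j => hφ.le_apply
  have hidx : ∀ j : ℕ, φ (j + 1) - 1 + 1 = φ (j + 1) := fun j =>
    Nat.succ_pred_eq_of_pos (lt_of_lt_of_le (Nat.succ_pos j) (hφge j))
  set xs : ℕ → X := fun j => x (φ (j + 1)) with hxs_def
  set ys : ℕ → X := fun j => y (φ (j + 1)) with hys_def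
  set σ : ℕ → ℝ := fun j => τs (φ (j + 1) - 1) with hσ_def
  have halg' : ∀ j, ‖gradqx f G PC (σ j) (xs j) (ys j)‖ ≤ δ (φ (j + 1) - 1) ∧
      ys j ∈ projSet D (xs j) := by
    intro j
    have h := halg (φ (j + 1) - 1)
    rw [hidx j] at h
    exact h
  have hxs : Tendsto xs atTop (𝓝 xb) := hxb.comp (tendsto_add_atTop_nat 1)
  have hys : Tendsto ys atTop (𝓝 yb) := hyb.comp (tendsto_add_atTop_nat 1)
  have hδ' : Tendsto (fun j => δ (φ (j + 1) - 1)) atTop (𝓝 0) := by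
    apply hδ0.comp
    refine tendsto_atTop_mono (fun j => ?_) tendsto_id
    exact Nat.le_pred_of_lt (lt_of_lt_of_le (Nat.lt_succ_self j) (hφge j))
  set ε : ℕ → X := fun j => gradqx f G PC (σ j) (xs j) (ys j) with hε_def
  have hεto : Tendsto ε atTop (𝓝 0) := by
    rw [tendsto_zero_iff_norm_tendsto_zero]
    exact squeeze_zero (fun j => norm_nonneg _) (fun j => (halg' j).1) hδ'
  have hεeq : ∀ j, ε j = gradient f (xs j) + σ j • (xs j - ys j) +
      σ j • (ContinuousLinearMap.adjoint (fderiv ℝ G (xs j))) (G (xs j) - PC (G (xs j))) :=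
    fun j => gradqx_eq f G hf hG hCconv PC hPC (σ j) (xs j) (ys j)
  set z1 : ℕ → Y := fun j => G (xs j) - PC (G (xs j)) with hz1_def
  set z2 : ℕ → X := fun j => xs j - ys j with hz2_def
  set vs : ℕ → X × X := fun j => (ε j - gradient f (xs j), (0:X)) with hvs_def
  have hGc : Tendsto (fun j => G (xs j)) atTop (𝓝 (G xb)) :=
    (hG.continuous.tendsto xb).comp hxs
  have hgradc : Continuous fun u : X => gradient f u := by
    have h1 : Continuous fun u => fderiv ℝ f u := hf.continuous_fderiv one_ne_zero
    exact ((InnerProductSpace.toDual ℝ X).symm.continuous).comp h1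
  have hz1to : Tendsto z1 atTop (𝓝 0) := by
    rw [tendsto_zero_iff_norm_tendsto_zero]
    have hb : ∀ j, ‖z1 j‖ ≤ ‖G xb - G (xs j)‖ := by
      intro j
      show ‖G (xs j) - PC (G (xs j))‖ ≤ _
      rw [norm_sub_rev]
      exact (hPC (G (xs j))).2 (G xb) hGxbC
    refine squeeze_zero (fun j => norm_nonneg _) hb ?_
    have h := (tendsto_const_nhds (x := G xb)).sub hGc
    rw [sub_self] at h
    simpa using h.norm
  have hz2to : Tendsto z2 atTop (𝓝 0) := by
    have h := hxs.sub hys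
    rw [hxyb, sub_self] at h
    exact h
  have hvsto : Tendsto vs atTop (𝓝 (-gradient f xb, 0)) := by
    apply Tendsto.prodMk_nhds
    · have h2 : Tendsto (fun j => gradient f (xs j)) atTop (𝓝 (gradient f xb)) :=
        (hgradc.tendsto xb).comp hxs
      have h := hεto.sub h2
      rwa [zero_sub] at h
    · exact tendsto_const_nhds
  have hmem : ∀ j, vs j ∈ MsetDec G C D (xs j) (ys j) (z1 j) (z2 j) := by
    intro j
    have hrw : G (xs j) - z1 j = PC (G (xs j)) := sub_sub_cancel _ _
    refine ⟨sub_self _, σ j • z1 j, ?_, σ j • z2 j,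
      σ j • z2 j, smul_sub_mem_limNormalCone (halg' j).2 (hτpos _).le, ?_⟩
    · rw [hrw]
      refine ⟨(hPC (G (xs j))).1, fun c hc => ?_⟩
      rw [real_inner_smul_left]
      exact mul_nonpos_of_nonneg_of_nonpos (hτpos _).le
        (proj_vi hCconv PC hPC (G (xs j)) c hc)
    · refine Prod.ext ?_ ?_
      · show ε j - gradient f (xs j) = _
        rw [hεeq j, map_smul]
        simp only [hz1_def, hz2_def]
        abel
      · show (0:X) = _
        rw [neg_add_cancel]
  have hv := hreg (-gradient f xb, 0) ⟨xs, ys, z1, z2, vs,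
    fun k => ((halg' k).2).1, hxs, hys, hz1to, hz2to, hvsto, hmem⟩
  obtain ⟨-, l, hl, μ, w, hw, heq⟩ := hv
  rw [sub_zero] at hl
  have h1 : -gradient f xb = ContinuousLinearMap.adjoint (fderiv ℝ G xb) l + μ :=
    congrArg Prod.fst heq
  have h2 : -μ + w = (0:X) := (congrArg Prod.snd heq).symm
  have hwμ : w = μ := by rw [neg_add_eq_zero] at h2; exact h2.symm
  refine ⟨hGxbC, by rw [hxyb]; exact hybD, l, hl, w, by rw [hxyb]; exact hw, ?_⟩
  rw [hwμ, add_assoc, ← h1, add_neg_cancel]
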